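/- Energy boost for an irregular partition: Let G be a finite graph, ε > 0, and P a partition of V(G) into k finite nonempty parts that is not ε-regular. Then there exists a partition Q of V(G) refining P such that the mean square density of Q is at least that of P plus ε⁵, each part R ∈ P contains at most 2^{k+1} parts of Q, and |Q| ≤ k·2^{k+1}. -/

import Mathlib

open Finset
open scoped Classical

/-- The number of ordered pairs `(x, y) ∈ X × Y` joined by an edge of `G`. -/
noncomputable def edgeCount {V : Type*} (G : SimpleGraph V) (X Y : Finset V) : ℕ :=
  ((X ×ˢ Y).filter fun p => G.Adj p.1 p.2).card

/-- The edge density `d(X,Y) = e(X,Y) / (|X| |Y|)`. -/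
noncomputable def density {V : Type*} (G : SimpleGraph V) (X Y : Finset V) : ℝ :=
  (edgeCount G X Y : ℝ) / ((X.card : ℝ) * (Y.card : ℝ))

/-- `(X, Y)` is an `ε`-regular pair in `G`. -/
def IsRegularPair {V : Type*} (G : SimpleGraph V) (X Y : Finset V) (ε : ℝ) : Prop :=
  ∀ A ⊆ X, ∀ B ⊆ Y, ε * X.card ≤ A.card → ε * Y.card ≤ B.card →
    |density G A B - density G X Y| ≤ ε

/-- The energy `q(U,W) = |U| |W| d(U,W)² / |V(G)|²` of a pair of vertex subsets. -/
noncomputable def energy {V : Type*} [Fintype V] (G : SimpleGraph V) (U W : Finset V) : ℝ :=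
  (U.card : ℝ) * (W.card : ℝ) * (density G U W) ^ 2 / (Fintype.card V : ℝ) ^ 2

/-- The mean square density of a family of parts. -/
noncomputable def meanSquareDensity {V : Type*} [Fintype V] (G : SimpleGraph V)
    (P : Finset (Finset V)) : ℝ :=
  ∑ R ∈ P, ∑ S ∈ P, energy G R S

section basic
variable {V : Type*} (G : SimpleGraph V)

lemma edgeCount_comm (X Y : Finset V) : edgeCount G X Y = edgeCount G Y X := by
  unfold edgeCount
  apply Finset.card_equiv (Equiv.prodComm V V)
  rintro ⟨x, y⟩
  simp only [mem_filter, mem_product, Equiv.prodComm_apply, Prod.swap]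
  rw [G.adj_comm]
  tauto

lemma density_comm (X Y : Finset V) : density G X Y = density G Y X := by
  unfold density
  rw [edgeCount_comm, mul_comm]

lemma edgeCount_real (X Y : Finset V) :
    (edgeCount G X Y : ℝ) = ∑ x ∈ X, ∑ y ∈ Y, (if G.Adj x y then (1 : ℝ) else 0) := by
  unfold edgeCount
  rw [Finset.card_filter]
  push_cast
  rw [Finset.sum_product]

lemma Finpartition.sum_parts_sum {X : Finset V} (PX : Finpartition X) (g : V → ℝ) :
    ∑ R ∈ PX.parts, ∑ x ∈ R, g x = ∑ x ∈ X, g x := by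
  classical
  conv_rhs => rw [← PX.biUnion_parts]
  exact (Finset.sum_biUnion (PX.supIndep.pairwiseDisjoint)).symm

lemma sum_edgeCount {X Y : Finset V} (PX : Finpartition X) (PY : Finpartition Y) :
    ∑ p ∈ PX.parts ×ˢ PY.parts, (edgeCount G p.1 p.2 : ℝ) = edgeCount G X Y := by
  rw [Finset.sum_product]
  simp only [edgeCount_real]
  rw [← PX.sum_parts_sum (fun x => ∑ y ∈ Y, (if G.Adj x y then (1:ℝ) else 0))]
  apply Finset.sum_congr rfl
  intro R _
  rw [Finset.sum_comm]
  apply Finset.sum_congr rfl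
  intro x _
  exact PY.sum_parts_sum _

lemma sum_cards {X Y : Finset V} (PX : Finpartition X) (PY : Finpartition Y) :
    ∑ p ∈ PX.parts ×ˢ PY.parts, ((p.1.card : ℝ) * (p.2.card : ℝ))
      = (X.card : ℝ) * (Y.card : ℝ) := by
  rw [Finset.sum_product]
  dsimp only
  rw [← Finset.sum_mul_sum]
  have h1 : ∑ R ∈ PX.parts, (R.card : ℝ) = (X.card : ℝ) := by
    exact_mod_cast PX.sum_card_parts
  have h2 : ∑ S ∈ PY.parts, (S.card : ℝ) = (Y.card : ℝ) := by
    exact_mod_cast PY.sum_card_parts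
  rw [h1, h2]

lemma variance_core {ι : Type*} (s : Finset ι) (w d : ι → ℝ) (W E db : ℝ)
    (hW : ∑ p ∈ s, w p = W) (hE : ∑ p ∈ s, w p * d p = E) (hdb : E = W * db) :
    ∑ p ∈ s, w p * (d p - db) ^ 2 = (∑ p ∈ s, w p * d p ^ 2) - W * db ^ 2 := by
  have : ∀ p ∈ s, w p * (d p - db) ^ 2
      = w p * d p ^ 2 - 2 * db * (w p * d p) + db ^ 2 * w p := fun p _ => by ring
  rw [Finset.sum_congr rfl this, Finset.sum_add_distrib, Finset.sum_sub_distrib,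
    ← Finset.mul_sum, ← Finset.mul_sum, hE, hW, hdb]
  ring

end basic

section main
variable {V : Type*} [Fintype V] (G : SimpleGraph V)

lemma sum_energy_eq {X Y : Finset V} (hX : X.Nonempty) (hY : Y.Nonempty)
    (PX : Finpartition X) (PY : Finpartition Y) :
    ∑ p ∈ PX.parts ×ˢ PY.parts, energy G p.1 p.2
      = energy G X Y + (∑ p ∈ PX.parts ×ˢ PY.parts,
          (p.1.card : ℝ) * (p.2.card : ℝ)
            * (density G p.1 p.2 - density G X Y) ^ 2) / (Fintype.card V : ℝ) ^ 2 := by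
  have hW0 : (0 : ℝ) < (X.card : ℝ) * (Y.card : ℝ) := by
    have := hX.card_pos; have := hY.card_pos; positivity
  have hE : ∑ p ∈ PX.parts ×ˢ PY.parts,
      ((p.1.card : ℝ) * (p.2.card : ℝ)) * density G p.1 p.2 = edgeCount G X Y := by
    rw [← sum_edgeCount G PX PY]
    refine Finset.sum_congr rfl fun p hp => ?_
    rw [Finset.mem_product] at hp
    have h1 : (0:ℝ) < p.1.card := by
      exact_mod_cast (PX.nonempty_of_mem_parts hp.1).card_pos
    have h2 : (0:ℝ) < p.2.card := by
      exact_mod_cast (PY.nonempty_of_mem_parts hp.2).card_pos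
    rw [density, mul_div_cancel₀]
    positivity
  have hdb : (edgeCount G X Y : ℝ)
      = ((X.card : ℝ) * (Y.card : ℝ)) * density G X Y := by
    rw [density, mul_div_cancel₀ _ (ne_of_gt hW0)]
  have hvar := variance_core (PX.parts ×ˢ PY.parts)
    (fun p => (p.1.card : ℝ) * (p.2.card : ℝ)) (fun p => density G p.1 p.2)
    ((X.card : ℝ) * (Y.card : ℝ)) (edgeCount G X Y) (density G X Y)
    (sum_cards PX PY) hE hdb
  rw [hvar]
  have hsum : ∑ p ∈ PX.parts ×ˢ PY.parts, energy G p.1 p.2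
      = (∑ p ∈ PX.parts ×ˢ PY.parts,
          ((p.1.card : ℝ) * (p.2.card : ℝ)) * density G p.1 p.2 ^ 2)
        / (Fintype.card V : ℝ) ^ 2 := by
    rw [Finset.sum_div]
    exact Finset.sum_congr rfl fun p _ => rfl
  rw [hsum, energy, sub_div]
  ring

/-- Restriction of a finpartition to a sub-finset which is a union of parts. -/
noncomputable def restrictPart {X A : Finset V} (PX : Finpartition X) (hA : A ⊆ X)
    (h : ∀ R ∈ PX.parts, R ⊆ A ∨ Disjoint R A) :
    Finpartition A where
  parts := PX.parts.filter (· ⊆ A)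
  supIndep := PX.supIndep.subset (Finset.filter_subset _ _)
  sup_parts := by
    apply le_antisymm
    · exact Finset.sup_le fun R hR => (Finset.mem_filter.1 hR).2
    · intro a ha
      obtain ⟨R, hR, haR⟩ := PX.exists_mem (hA ha)
      have hRA : R ⊆ A := (h R hR).resolve_right
        (fun hd => (Finset.disjoint_left.1 hd) haR ha)
      exact Finset.mem_sup.2 ⟨R, Finset.mem_filter.2 ⟨hR, hRA⟩, haR⟩
  bot_notMem := fun h' => PX.bot_notMem (Finset.mem_filter.1 h').1

lemma energy_boost_pair {X Y A B : Finset V} (hX : X.Nonempty) (hY : Y.Nonempty)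
    (hA : A ⊆ X) (hB : B ⊆ Y) (hAne : A.Nonempty) (hBne : B.Nonempty)
    (PX : Finpartition X) (PY : Finpartition Y)
    (hPA : ∀ R ∈ PX.parts, R ⊆ A ∨ Disjoint R A)
    (hPB : ∀ S ∈ PY.parts, S ⊆ B ∨ Disjoint S B) :
    energy G X Y + (A.card : ℝ) * (B.card : ℝ)
        * (density G A B - density G X Y) ^ 2 / (Fintype.card V : ℝ) ^ 2
      ≤ ∑ p ∈ PX.parts ×ˢ PY.parts, energy G p.1 p.2 := by
  rw [sum_energy_eq G hX hY PX PY]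
  have hn2 : (0 : ℝ) < (Fintype.card V : ℝ) ^ 2 := by
    have : Nonempty V := ⟨hX.choose⟩
    have := Fintype.card_pos (α := V)
    positivity
  rw [add_le_add_iff_left, div_le_div_iff_of_pos_right hn2]
  set db := density G X Y with hdbdef
  -- restrict to the sub-product
  set QA := restrictPart PX hA hPA with hQA
  set QB := restrictPart PY hB hPB with hQB
  have hsub : QA.parts ×ˢ QB.parts ⊆ PX.parts ×ˢ PY.parts := by
    apply Finset.product_subset_product <;> exact Finset.filter_subset _ _
  have hWA : ∑ p ∈ QA.parts ×ˢ QB.parts, ((p.1.card : ℝ) * (p.2.card : ℝ))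
      = (A.card : ℝ) * (B.card : ℝ) := sum_cards QA QB
  have hEA : ∑ p ∈ QA.parts ×ˢ QB.parts,
      ((p.1.card : ℝ) * (p.2.card : ℝ)) * density G p.1 p.2 = edgeCount G A B := by
    rw [← sum_edgeCount G QA QB]
    refine Finset.sum_congr rfl fun p hp => ?_
    rw [Finset.mem_product] at hp
    have h1 : (0:ℝ) < p.1.card := by
      exact_mod_cast (QA.nonempty_of_mem_parts hp.1).card_pos
    have h2 : (0:ℝ) < p.2.card := by
      exact_mod_cast (QB.nonempty_of_mem_parts hp.2).card_pos
    rw [density, mul_div_cancel₀]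
    positivity
  have hWA0 : (0 : ℝ) < (A.card : ℝ) * (B.card : ℝ) := by
    have := hAne.card_pos; have := hBne.card_pos; positivity
  have hdAB : (edgeCount G A B : ℝ)
      = ((A.card : ℝ) * (B.card : ℝ)) * density G A B := by
    rw [density, mul_div_cancel₀ _ (ne_of_gt hWA0)]
  -- the centered sum over the sub-product
  have hcent : ∑ p ∈ QA.parts ×ˢ QB.parts,
      ((p.1.card : ℝ) * (p.2.card : ℝ)) * (density G p.1 p.2 - db)
      = ((A.card : ℝ) * (B.card : ℝ)) * (density G A B - db) := by
    have : ∀ p ∈ QA.parts ×ˢ QB.parts,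
        ((p.1.card : ℝ) * (p.2.card : ℝ)) * (density G p.1 p.2 - db)
        = ((p.1.card : ℝ) * (p.2.card : ℝ)) * density G p.1 p.2
          - db * ((p.1.card : ℝ) * (p.2.card : ℝ)) := fun p _ => by ring
    rw [Finset.sum_congr rfl this, Finset.sum_sub_distrib, hEA, ← Finset.mul_sum, hWA, hdAB]
    ring
  -- Cauchy--Schwarz
  have hCS := Finset.sum_sq_le_sum_mul_sum_of_sq_eq_mul (QA.parts ×ˢ QB.parts)
    (f := fun p => (p.1.card : ℝ) * (p.2.card : ℝ))
    (g := fun p => ((p.1.card : ℝ) * (p.2.card : ℝ)) * (density G p.1 p.2 - db) ^ 2)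
    (r := fun p => ((p.1.card : ℝ) * (p.2.card : ℝ)) * (density G p.1 p.2 - db))
    (fun p _ => by positivity) (fun p _ => by positivity) (fun p _ => by ring)
  rw [hcent, hWA] at hCS
  have hle : ∑ p ∈ QA.parts ×ˢ QB.parts,
      ((p.1.card : ℝ) * (p.2.card : ℝ)) * (density G p.1 p.2 - db) ^ 2
      ≤ ∑ p ∈ PX.parts ×ˢ PY.parts,
        ((p.1.card : ℝ) * (p.2.card : ℝ)) * (density G p.1 p.2 - db) ^ 2 := by
    apply Finset.sum_le_sum_of_subset_of_nonneg hsub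
    intro p _ _
    positivity
  nlinarith [hCS, hle, hWA0]

end main

section combinatorial
variable {V : Type*}

lemma atomise_subset_or_disjoint {s t u : Finset V} {F : Finset (Finset V)} (ht : t ∈ F)
    (hu : u ∈ (Finpartition.atomise s F).parts) : u ⊆ t ∨ Disjoint u t := by
  classical
  rw [Finpartition.mem_atomise] at hu
  obtain ⟨hne, Q, hQ, rfl⟩ := hu
  by_cases h : t ∈ Q
  · left
    intro i hi
    rw [Finset.mem_filter] at hi
    exact (hi.2 t ht).1 h
  · right
    rw [Finset.disjoint_left]
    intro i hi hit
    rw [Finset.mem_filter] at hi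
    exact h ((hi.2 t ht).2 hit)

lemma sum_bind_parts {X : Finset V} (P : Finpartition X)
    (f : ∀ A ∈ P.parts, Finpartition A) (g : Finset V → ℝ) :
    ∑ R ∈ (P.bind f).parts, g R = ∑ A ∈ P.parts.attach, ∑ R ∈ (f A.1 A.2).parts, g R := by
  classical
  rw [Finpartition.bind_parts]
  apply Finset.sum_biUnion
  rintro ⟨b, hb⟩ - ⟨c, hc⟩ - hbc
  simp only [Function.onFun]
  rw [Finset.disjoint_left]
  rintro d hdb hdc
  rw [Ne, Subtype.mk_eq_mk] at hbc
  exact (f b hb).ne_bot hdb (eq_bot_iff.2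
    ((le_inf ((f b hb).le hdb) ((f c hc).le hdc)).trans (P.disjoint hb hc hbc).le_bot))

variable (G : SimpleGraph V) (ε : ℝ)

lemma isRegularPair_symm {X Y : Finset V} (h : IsRegularPair G X Y ε) :
    IsRegularPair G Y X ε := by
  intro B hBY A hAX h2 h1
  have := h A hAX B hBY h1 h2
  rwa [density_comm G B A, density_comm G Y X]

/-- Symmetrised first witness of irregularity. -/
noncomputable def witA (AB : Finset V → Finset V → Finset V × Finset V)
    (X Y : Finset V) : Finset V :=
  if X = Y then (AB X X).1 else if WellOrderingRel X Y then (AB X Y).1 else (AB Y X).2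

/-- Symmetrised second witness of irregularity. -/
noncomputable def witB (AB : Finset V → Finset V → Finset V × Finset V)
    (X Y : Finset V) : Finset V :=
  if X = Y then (AB X X).2 else witA AB Y X

lemma wit_spec (AB : Finset V → Finset V → Finset V × Finset V)
    (hAB : ∀ X Y : Finset V, ¬ IsRegularPair G X Y ε →
      (AB X Y).1 ⊆ X ∧ (AB X Y).2 ⊆ Y ∧ ε * X.card ≤ ((AB X Y).1).card ∧
        ε * Y.card ≤ ((AB X Y).2).card ∧
        ε < |density G (AB X Y).1 (AB X Y).2 - density G X Y|)
    (X Y : Finset V) (h : ¬ IsRegularPair G X Y ε) :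
    witA AB X Y ⊆ X ∧ witB AB X Y ⊆ Y ∧ ε * X.card ≤ (witA AB X Y).card ∧
      ε * Y.card ≤ (witB AB X Y).card ∧
      ε < |density G (witA AB X Y) (witB AB X Y) - density G X Y| := by
  by_cases hXY : X = Y
  · subst hXY
    simp only [witA, witB, if_pos rfl]
    exact hAB X X h
  · have hYX : Y ≠ X := Ne.symm hXY
    rcases trichotomous_of WellOrderingRel X Y with hr | hr | hr
    · have hnr : ¬ WellOrderingRel Y X := asymm hr
      simp only [witA, witB, if_neg hXY, if_pos hr, if_neg hYX, if_neg hnr]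
      exact hAB X Y h
    · exact absurd hr hXY
    · have hnr : ¬ WellOrderingRel X Y := asymm hr
      simp only [witA, witB, if_neg hXY, if_neg hnr, if_neg hYX, if_pos hr]
      have h' : ¬ IsRegularPair G Y X ε := fun hreg => h (isRegularPair_symm G ε hreg)
      obtain ⟨h1, h2, h3, h4, h5⟩ := hAB Y X h'
      refine ⟨h2, h1, h4, h3, ?_⟩
      rwa [density_comm G (AB Y X).1 (AB Y X).2, density_comm G Y X] at h5

end combinatorial

/-- Energy boost for an irregular partition: any `ε`-irregular partition of the
vertex set into `k` parts admits a refinement whose mean square density is larger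
by at least `ε ^ 5`, where each part is split into at most `2 ^ (k + 1)` pieces,
so the refinement has at most `k * 2 ^ (k + 1)` parts. -/
theorem energy_boost_irregular_partition {V : Type*} [Fintype V] (G : SimpleGraph V)
    (ε : ℝ) (hε : 0 < ε) (P : Finpartition (univ : Finset V))
    (hirr : ¬ (∑ R ∈ P.parts, ∑ S ∈ P.parts,
        (if ¬ IsRegularPair G R S ε then ((R.card : ℝ) * (S.card : ℝ)) else 0))
          ≤ ε * (Fintype.card V : ℝ) ^ 2) :
    ∃ Q : Finpartition (univ : Finset V),
      (∀ S ∈ Q.parts, ∃ R ∈ P.parts, S ⊆ R) ∧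
      meanSquareDensity G P.parts + ε ^ 5 ≤ meanSquareDensity G Q.parts ∧
      (∀ R ∈ P.parts, (Q.parts.filter (· ⊆ R)).card ≤ 2 ^ (P.parts.card + 1)) ∧
      Q.parts.card ≤ P.parts.card * 2 ^ (P.parts.card + 1) := by
  classical
  set k := P.parts.card with hk
  -- the vertex type is nonempty
  have hn : 0 < Fintype.card V := by
    rcases Nat.eq_zero_or_pos (Fintype.card V) with h | h
    · exfalso
      apply hirr
      have huniv : (univ : Finset V) = ∅ := Finset.card_eq_zero.mp (by simp [h])
      have hparts : P.parts = ∅ := by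
        rw [Finset.eq_empty_iff_forall_notMem]
        intro R hR
        have h1 := P.nonempty_of_mem_parts hR
        have h2 : R ⊆ univ := P.le hR
        rw [huniv] at h2
        exact h1.ne_empty (Finset.subset_empty.mp h2)
      rw [hparts]
      simp [h]
    · exact h
  have hn2 : (0 : ℝ) < (Fintype.card V : ℝ) ^ 2 := by positivity
  push_neg at hirr
  -- choose witnesses of irregularity
  have hwit : ∀ X Y : Finset V, ∃ AB : Finset V × Finset V,
      ¬ IsRegularPair G X Y ε →
        AB.1 ⊆ X ∧ AB.2 ⊆ Y ∧ ε * X.card ≤ (AB.1).card ∧ ε * Y.card ≤ (AB.2).card ∧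
          ε < |density G AB.1 AB.2 - density G X Y| := by
    intro X Y
    by_cases h : IsRegularPair G X Y ε
    · exact ⟨(∅, ∅), fun h' => absurd h h'⟩
    · have h' := h
      unfold IsRegularPair at h'
      push_neg at h'
      obtain ⟨A, hAX, B, hBY, h1, h2, h3⟩ := h'
      exact ⟨(A, B), fun _ => ⟨hAX, hBY, h1, h2, h3⟩⟩
  choose AB hAB using hwit
  have hw := wit_spec G ε AB hAB
  -- the families used to cut each part
  set F : Finset V → Finset (Finset V) :=
    fun X => insert (AB X X).2 (P.parts.image (witA AB X)) with hF
  have hFcard : ∀ X, (F X).card ≤ k + 1 := fun X =>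
    (Finset.card_insert_le _ _).trans (by
      have := Finset.card_image_le (s := P.parts) (f := witA AB X)
      omega)
  have hmemA : ∀ X, ∀ Y ∈ P.parts, witA AB X Y ∈ F X := fun X Y hY =>
    Finset.mem_insert_of_mem (Finset.mem_image_of_mem _ hY)
  have hmemB : ∀ Y, ∀ X ∈ P.parts, witB AB X Y ∈ F Y := by
    intro Y X hX
    by_cases hXY : X = Y
    · subst hXY
      simp only [witB, if_pos rfl]
      exact Finset.mem_insert_self _ _
    · simp only [witB, if_neg hXY]
      exact Finset.mem_insert_of_mem (Finset.mem_image_of_mem _ hX)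
  -- the refinement
  set f : ∀ X ∈ P.parts, Finpartition X := fun X _ => Finpartition.atomise X (F X) with hf
  set Q : Finpartition (univ : Finset V) := P.bind f with hQ
  have hQmem : ∀ u ∈ Q.parts, ∃ (X : Finset V) (_hX : X ∈ P.parts),
      u ∈ (Finpartition.atomise X (F X)).parts := by
    intro u hu
    rw [hQ, Finpartition.mem_bind] at hu
    exact hu
  refine ⟨Q, ?_, ?_, ?_, ?_⟩
  · -- refinement property
    intro S hS
    obtain ⟨X, hX, huX⟩ := hQmem S hS
    exact ⟨X, hX, (Finpartition.atomise X (F X)).le huX⟩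
  · -- energy increase
    have hmsdQ : meanSquareDensity G Q.parts
        = ∑ X ∈ P.parts, ∑ Y ∈ P.parts,
            ∑ p ∈ (Finpartition.atomise X (F X)).parts ×ˢ
              (Finpartition.atomise Y (F Y)).parts, energy G p.1 p.2 := by
      rw [meanSquareDensity, sum_bind_parts P f (fun R => ∑ S ∈ Q.parts, energy G R S)]
      have step1 : ∀ X : {x // x ∈ P.parts}, ∀ R : Finset V,
          ∑ S ∈ Q.parts, energy G R S
            = ∑ Y ∈ P.parts.attach, ∑ S ∈ (Finpartition.atomise Y.1 (F Y.1)).parts,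
                energy G R S := fun X R =>
        sum_bind_parts P f (fun S => energy G R S)
      calc ∑ X ∈ P.parts.attach, ∑ R ∈ (f X.1 X.2).parts, ∑ S ∈ Q.parts, energy G R S
          = ∑ X ∈ P.parts.attach, ∑ Y ∈ P.parts.attach,
              ∑ R ∈ (Finpartition.atomise X.1 (F X.1)).parts,
                ∑ S ∈ (Finpartition.atomise Y.1 (F Y.1)).parts, energy G R S := by
            refine Finset.sum_congr rfl fun X _ => ?_
            rw [Finset.sum_congr rfl fun R _ => step1 X R]
            exact Finset.sum_comm
        _ = ∑ X ∈ P.parts, ∑ Y ∈ P.parts,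
              ∑ R ∈ (Finpartition.atomise X (F X)).parts,
                ∑ S ∈ (Finpartition.atomise Y (F Y)).parts, energy G R S := by
            rw [Finset.sum_attach P.parts (fun X => ∑ Y ∈ P.parts.attach,
              ∑ R ∈ (Finpartition.atomise X (F X)).parts,
                ∑ S ∈ (Finpartition.atomise Y.1 (F Y.1)).parts, energy G R S)]
            refine Finset.sum_congr rfl fun X _ => ?_
            exact Finset.sum_attach P.parts (fun Y =>
              ∑ R ∈ (Finpartition.atomise X (F X)).parts,
                ∑ S ∈ (Finpartition.atomise Y (F Y)).parts, energy G R S)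
        _ = _ := by
            refine Finset.sum_congr rfl fun X _ => Finset.sum_congr rfl fun Y _ => ?_
            rw [Finset.sum_product]
    rw [hmsdQ]
    -- pairwise estimate
    have hpair : ∀ X ∈ P.parts, ∀ Y ∈ P.parts,
        energy G X Y + ε ^ 4 *
            (if ¬ IsRegularPair G X Y ε then ((X.card : ℝ) * (Y.card : ℝ)) else 0)
              / (Fintype.card V : ℝ) ^ 2
          ≤ ∑ p ∈ (Finpartition.atomise X (F X)).parts ×ˢ
              (Finpartition.atomise Y (F Y)).parts, energy G p.1 p.2 := by
      intro X hX Y hY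
      have hXne := P.nonempty_of_mem_parts hX
      have hYne := P.nonempty_of_mem_parts hY
      by_cases hreg : IsRegularPair G X Y ε
      · rw [if_neg (fun h => h hreg)]
        rw [sum_energy_eq G hXne hYne]
        have h0 : (0:ℝ) ≤ (∑ p ∈ (Finpartition.atomise X (F X)).parts ×ˢ
            (Finpartition.atomise Y (F Y)).parts,
            (p.1.card : ℝ) * (p.2.card : ℝ)
              * (density G p.1 p.2 - density G X Y) ^ 2) / (Fintype.card V : ℝ) ^ 2 := by
          apply div_nonneg _ (le_of_lt hn2)
          apply Finset.sum_nonneg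
          intro p _
          positivity
        simp only [mul_zero, zero_div]
        linarith
      · rw [if_pos hreg]
        obtain ⟨hAX, hBY, hcA, hcB, hd⟩ := hw X Y hreg
        set A := witA AB X Y
        set B := witB AB X Y
        have hAne : A.Nonempty := by
          rw [← Finset.card_pos]
          have : (0:ℝ) < X.card := by exact_mod_cast hXne.card_pos
          have : (0:ℝ) < A.card := lt_of_lt_of_le (by positivity) hcA
          exact_mod_cast this
        have hBne : B.Nonempty := by
          rw [← Finset.card_pos]
          have : (0:ℝ) < Y.card := by exact_mod_cast hYne.card_pos
          have : (0:ℝ) < B.card := lt_of_lt_of_le (by positivity) hcB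
          exact_mod_cast this
        have hboost := energy_boost_pair G hXne hYne hAX hBY hAne hBne
          (Finpartition.atomise X (F X)) (Finpartition.atomise Y (F Y))
          (fun R hR => atomise_subset_or_disjoint (hmemA X Y hY) hR)
          (fun S hS => atomise_subset_or_disjoint (hmemB Y X hX) hS)
        refine le_trans ?_ hboost
        rw [add_le_add_iff_left, div_le_div_iff_of_pos_right hn2]
        have t1 : (ε * X.card) * (ε * Y.card) ≤ (A.card : ℝ) * B.card :=
          mul_le_mul hcA hcB (by positivity)
            ((by positivity : (0:ℝ) ≤ ε * X.card).trans hcA)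
        have t2 : ε ^ 2 < (density G A B - density G X Y) ^ 2 := by
          rw [← sq_abs (density G A B - density G X Y)]
          exact pow_lt_pow_left₀ hd (le_of_lt hε) (by norm_num)
        calc ε ^ 4 * ((X.card : ℝ) * (Y.card : ℝ))
            = ((ε * X.card) * (ε * Y.card)) * ε ^ 2 := by ring
          _ ≤ ((A.card : ℝ) * B.card) * (density G A B - density G X Y) ^ 2 :=
              mul_le_mul t1 (le_of_lt t2) (by positivity) (by positivity)
          _ = (A.card : ℝ) * (B.card : ℝ) * (density G A B - density G X Y) ^ 2 := by ring
    have hsum : ∑ X ∈ P.parts, ∑ Y ∈ P.parts, (energy G X Y + ε ^ 4 *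
          (if ¬ IsRegularPair G X Y ε then ((X.card : ℝ) * (Y.card : ℝ)) else 0)
            / (Fintype.card V : ℝ) ^ 2)
        ≤ ∑ X ∈ P.parts, ∑ Y ∈ P.parts,
            ∑ p ∈ (Finpartition.atomise X (F X)).parts ×ˢ
              (Finpartition.atomise Y (F Y)).parts, energy G p.1 p.2 :=
      Finset.sum_le_sum fun X hX => Finset.sum_le_sum fun Y hY => hpair X hX Y hY
    have hL : ∑ X ∈ P.parts, ∑ Y ∈ P.parts, (energy G X Y + ε ^ 4 *
          (if ¬ IsRegularPair G X Y ε then ((X.card : ℝ) * (Y.card : ℝ)) else 0)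
            / (Fintype.card V : ℝ) ^ 2)
        = meanSquareDensity G P.parts + (ε ^ 4 / (Fintype.card V : ℝ) ^ 2) *
            (∑ X ∈ P.parts, ∑ Y ∈ P.parts,
              (if ¬ IsRegularPair G X Y ε then ((X.card : ℝ) * (Y.card : ℝ)) else 0)) := by
      simp only [Finset.sum_add_distrib]
      unfold meanSquareDensity
      congr 1
      rw [Finset.mul_sum]
      refine Finset.sum_congr rfl fun X _ => ?_
      rw [Finset.mul_sum]
      refine Finset.sum_congr rfl fun Y _ => ?_
      ring
    have h1 : ε ^ 5 < (ε ^ 4 / (Fintype.card V : ℝ) ^ 2) *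
        (∑ X ∈ P.parts, ∑ Y ∈ P.parts,
          (if ¬ IsRegularPair G X Y ε then ((X.card : ℝ) * (Y.card : ℝ)) else 0)) := by
      have hpos : (0:ℝ) < ε ^ 4 / (Fintype.card V : ℝ) ^ 2 := by positivity
      calc ε ^ 5 = (ε ^ 4 / (Fintype.card V : ℝ) ^ 2) * (ε * (Fintype.card V : ℝ) ^ 2) := by
            field_simp
        _ < _ := mul_lt_mul_of_pos_left hirr hpos
    linarith [hsum, hL]
  · -- part counts within each R
    intro R hR
    have hsub : Q.parts.filter (· ⊆ R) ⊆ (Finpartition.atomise R (F R)).parts := by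
      intro u hu
      rw [Finset.mem_filter] at hu
      obtain ⟨huQ, huR⟩ := hu
      obtain ⟨X, hX, huX⟩ := hQmem u huQ
      have hXR : X = R := by
        by_contra hne
        obtain ⟨x, hx⟩ := (Finpartition.atomise X (F X)).nonempty_of_mem_parts huX
        exact (Finset.disjoint_left.1 (P.disjoint hX hR hne))
          ((Finpartition.atomise X (F X)).le huX hx) (huR hx)
      subst hXR
      exact huX
    calc (Q.parts.filter (· ⊆ R)).card
        ≤ (Finpartition.atomise R (F R)).parts.card := Finset.card_le_card hsub
      _ ≤ 2 ^ (F R).card := Finpartition.card_atomise_le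
      _ ≤ 2 ^ (k + 1) := Nat.pow_le_pow_right (by norm_num) (hFcard R)
  · -- total number of parts
    rw [hQ, Finpartition.card_bind]
    calc ∑ X ∈ P.parts.attach, (f X.1 X.2).parts.card
        ≤ ∑ _X ∈ P.parts.attach, 2 ^ (k + 1) := by
          apply Finset.sum_le_sum
          intro X _
          exact le_trans Finpartition.card_atomise_le
            (Nat.pow_le_pow_right (by norm_num) (hFcard X.1))
      _ = k * 2 ^ (k + 1) := by
          rw [Finset.sum_const, Finset.card_attach, smul_eq_mul]
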